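/- For every real number d ≥ 1 and every v ∈ V with v* = v, one has ⦀v⦀_d = ‖v‖; that is, ⦀·⦀_d extends the norm ‖·‖ from V_ℝ to V. -/

import Mathlib

open MeasureTheory
open Real Set

lemma mom_aux {s : ℝ} (hs : -1 < s) :
    ∫ x in Ioi (0:ℝ), x ^ s * Real.exp (-x ^ 2) = Real.Gamma ((s + 1) / 2) / 2 := by
  have h := integral_rpow_mul_exp_neg_rpow (p := 2) (q := s) two_pos hs
  have h2 : ∀ x : ℝ, x ^ (2:ℝ) = x ^ (2:ℕ) := fun x => by
    rw [show (2:ℝ) = ((2:ℕ):ℝ) by norm_num, Real.rpow_natCast]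
  simp_rw [h2] at h
  rw [h]; ring

lemma integral_abs_cos_rpow {d : ℝ} (hd : 0 ≤ d) :
    ∫ t in (0:ℝ)..(2 * π), |Real.cos t| ^ d
      = 2 * Real.Gamma ((d + 1) / 2) * Real.sqrt π / Real.Gamma (d / 2 + 1) := by
  have hb : 0 < Real.Gamma (d / 2 + 1) := Real.Gamma_pos_of_pos (by linarith)
  have hA : ∫ t in Ioo (-π) π, |Real.cos t| ^ d
      = ∫ t in (0:ℝ)..(2 * π), |Real.cos t| ^ d := by
    have hper : Function.Periodic (fun t : ℝ => |Real.cos t| ^ d) (2 * π) := by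
      intro t; simp [Real.cos_add_two_pi]
    rw [← MeasureTheory.integral_Ioc_eq_integral_Ioo,
      ← intervalIntegral.integral_of_le (by linarith [pi_pos] : -π ≤ π)]
    have h := hper.intervalIntegral_add_eq (-π) 0
    rw [show -π + 2*π = π by ring, zero_add] at h
    exact h
  have key :
      (∫ x in Ioi (0:ℝ), x ^ (d + 1) * Real.exp (-x ^ 2)) *
        ∫ t in Ioo (-π) π, |Real.cos t| ^ d
        = (∫ x : ℝ, |x| ^ d * Real.exp (-x ^ 2)) * ∫ y : ℝ, Real.exp (-y ^ 2) := by
    calc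
      (∫ x in Ioi (0:ℝ), x ^ (d + 1) * Real.exp (-x ^ 2)) *
          ∫ t in Ioo (-π) π, |Real.cos t| ^ d
        = ∫ p in Ioi (0:ℝ) ×ˢ Ioo (-π) π,
            (p.1 ^ (d + 1) * Real.exp (-p.1 ^ 2)) * |Real.cos p.2| ^ d := by
          rw [Measure.volume_eq_prod]
          exact (setIntegral_prod_mul (fun x : ℝ => x ^ (d + 1) * Real.exp (-x ^ 2))
            (fun θ : ℝ => |Real.cos θ| ^ d) _ _).symm
      _ = ∫ p in polarCoord.target, p.1 •
            ((|p.1 * Real.cos p.2| ^ d * Real.exp (-(p.1 * Real.cos p.2) ^ 2)) *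
              Real.exp (-(p.1 * Real.sin p.2) ^ 2)) := by
          refine (setIntegral_congr_fun (measurableSet_Ioi.prod measurableSet_Ioo)
            (fun p hp => ?_)).symm
          have hp1 : (0:ℝ) < p.1 := hp.1
          have hcs : (p.1 * Real.cos p.2) ^ 2 + (p.1 * Real.sin p.2) ^ 2 = p.1 ^ 2 := by
            have h := Real.sin_sq_add_cos_sq p.2; nlinarith [h]
          have e1 : Real.exp (-(p.1 * Real.cos p.2) ^ 2) * Real.exp (-(p.1 * Real.sin p.2) ^ 2)
              = Real.exp (-p.1 ^ 2) := by
            rw [← Real.exp_add, show -(p.1 * Real.cos p.2) ^ 2 + -(p.1 * Real.sin p.2) ^ 2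
              = -((p.1 * Real.cos p.2) ^ 2 + (p.1 * Real.sin p.2) ^ 2) by ring, hcs]
          rw [smul_eq_mul, mul_assoc (|p.1 * Real.cos p.2| ^ d), e1,
            abs_mul, abs_of_pos hp1, Real.mul_rpow hp1.le (abs_nonneg _),
            Real.rpow_add hp1, Real.rpow_one]
          ring
      _ = ∫ p : ℝ × ℝ, (|p.1| ^ d * Real.exp (-p.1 ^ 2)) * Real.exp (-p.2 ^ 2) :=
          integral_comp_polarCoord_symm
            (fun p => (|p.1| ^ d * Real.exp (-p.1 ^ 2)) * Real.exp (-p.2 ^ 2))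
      _ = (∫ x : ℝ, |x| ^ d * Real.exp (-x ^ 2)) * ∫ y : ℝ, Real.exp (-y ^ 2) := by
          rw [Measure.volume_eq_prod]
          exact integral_prod_mul (fun x : ℝ => |x| ^ d * Real.exp (-x ^ 2))
            (fun y : ℝ => Real.exp (-y ^ 2))
  have h1 : ∫ x in Ioi (0:ℝ), x ^ (d + 1) * Real.exp (-x ^ 2)
      = Real.Gamma (d / 2 + 1) / 2 := by
    rw [mom_aux (by linarith), show (d + 1 + 1) / 2 = d / 2 + 1 by ring]
  have h2 : ∫ x : ℝ, |x| ^ d * Real.exp (-x ^ 2) = Real.Gamma ((d + 1) / 2) := by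
    have hfe : (fun x : ℝ => |x| ^ d * Real.exp (-x ^ 2))
        = fun x : ℝ => (fun y : ℝ => y ^ d * Real.exp (-y ^ 2)) |x| := by
      funext x; simp [sq_abs]
    rw [hfe, integral_comp_abs (f := fun y : ℝ => y ^ d * Real.exp (-y ^ 2)), mom_aux (by linarith)]; ring
  have h3 : ∫ y : ℝ, Real.exp (-y ^ 2) = Real.sqrt π := by
    have h := integral_gaussian 1
    simpa using h
  rw [hA, h1, h2, h3] at key
  rw [eq_div_iff hb.ne']
  linear_combination 2 * key

/-- Given a function `Nr` (a norm on the real points of `V`) and a conjugate-linear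
involution `invol` on `V`, this is the extended quantity
`⦀v⦀_d = ((1/(2π b_d)) ∫_0^{2π} ‖e^{it}v + e^{-it}v*‖^d dt)^(1/d)` with
`b_d = Γ(d+1)/Γ(d/2+1)^2`, so `1/(2π b_d) = Γ(d/2+1)^2/(2π Γ(d+1))`. -/
noncomputable def circNorm {V : Type} [AddCommGroup V] [Module ℂ V]
    (Nr : V → ℝ) (invol : V → V) (d : ℝ) (v : V) : ℝ :=
  ((Real.Gamma (d / 2 + 1) ^ 2 / (2 * Real.pi * Real.Gamma (d + 1))) *
    ∫ t in (0:ℝ)..(2 * Real.pi),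
      Nr (Complex.exp (↑t * Complex.I) • v +
        Complex.exp (-(↑t * Complex.I)) • invol v) ^ d) ^ (1 / d) 

/-- For every real `d ≥ 1` and every `v ∈ V` with `v* = v`, one has
`⦀v⦀_d = ‖v‖`; that is, `⦀·⦀_d` extends the norm `‖·‖` from `V_ℝ` to `V`. -/
theorem circNorm_extends {V : Type} [AddCommGroup V] [Module ℂ V]
    (invol : V → V)
    (hadd : ∀ u v : V, invol (u + v) = invol u + invol v)
    (hsmul : ∀ (c : ℂ) (v : V), invol (c • v) = (starRingEnd ℂ c) • invol v)
    (hinvol : ∀ v : V, invol (invol v) = v)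
    (Nr : V → ℝ)
    (hNnonneg : ∀ v : V, invol v = v → 0 ≤ Nr v)
    (hNdef : ∀ v : V, invol v = v → (Nr v = 0 ↔ v = 0))
    (hNhom : ∀ (r : ℝ) (v : V), invol v = v → Nr ((r : ℂ) • v) = |r| * Nr v)
    (hNadd : ∀ u v : V, invol u = u → invol v = v → Nr (u + v) ≤ Nr u + Nr v)
    (d : ℝ) (hd : 1 ≤ d) :
    ∀ v : V, invol v = v → circNorm Nr invol d v = Nr v := by
  intro v hv
  have hd0 : d ≠ 0 := by linarith
  have hNv : 0 ≤ Nr v := hNnonneg v hv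
  have hstep : ∀ t : ℝ,
      Complex.exp (↑t * Complex.I) • v + Complex.exp (-(↑t * Complex.I)) • invol v
        = ((2 * Real.cos t : ℝ) : ℂ) • v := by
    intro t
    rw [hv, ← add_smul]
    congr 1
    have h1 : ((2 * Real.cos t : ℝ) : ℂ) = 2 * Complex.cos t := by
      push_cast [Complex.ofReal_cos]
      ring
    rw [h1, show -((t:ℂ) * Complex.I) = ((-(t:ℂ))) * Complex.I by ring,
      Complex.exp_mul_I, Complex.exp_mul_I, Complex.cos_neg, Complex.sin_neg]
    ring
  have hint : (∫ t in (0:ℝ)..(2 * Real.pi),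
      Nr (Complex.exp (↑t * Complex.I) • v +
        Complex.exp (-(↑t * Complex.I)) • invol v) ^ d)
      = ((2:ℝ) ^ d * Nr v ^ d) * ∫ t in (0:ℝ)..(2 * Real.pi), |Real.cos t| ^ d := by
    rw [← intervalIntegral.integral_const_mul]
    apply intervalIntegral.integral_congr
    intro t _
    simp only [hstep t, hNhom _ v hv]
    rw [abs_mul, abs_two, Real.mul_rpow (by positivity) hNv,
      Real.mul_rpow (by norm_num) (abs_nonneg _)]
    ring
  have hb : 0 < Real.Gamma (d / 2 + 1) := Real.Gamma_pos_of_pos (by linarith)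
  have hg : 0 < Real.Gamma (d + 1) := Real.Gamma_pos_of_pos (by linarith)
  have hdup := Real.Gamma_mul_Gamma_add_half ((d + 1) / 2)
  rw [show (d + 1) / 2 + 1 / 2 = d / 2 + 1 by ring,
    show 2 * ((d + 1) / 2) = d + 1 by ring, show 1 - (d + 1) = -d by ring] at hdup
  have hconst : Real.Gamma (d / 2 + 1) ^ 2 / (2 * Real.pi * Real.Gamma (d + 1)) *
      ((2:ℝ) ^ d * Nr v ^ d *
        (2 * Real.Gamma ((d + 1) / 2) * Real.sqrt Real.pi / Real.Gamma (d / 2 + 1)))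
      = Nr v ^ d := by
    have ha : Real.Gamma ((d + 1) / 2)
        = Real.Gamma (d + 1) * (2:ℝ) ^ (-d) * Real.sqrt Real.pi / Real.Gamma (d / 2 + 1) := by
      rw [eq_div_iff hb.ne']; exact hdup
    have h2 : ((2:ℝ) ^ d) ≠ 0 := (Real.rpow_pos_of_pos two_pos d).ne'
    have hs0 : Real.sqrt Real.pi ≠ 0 := (Real.sqrt_pos.mpr Real.pi_pos).ne'
    rw [ha, Real.rpow_neg (by norm_num : (0:ℝ) ≤ 2),
      show (2 * Real.pi) = 2 * (Real.sqrt Real.pi * Real.sqrt Real.pi) by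
        rw [Real.mul_self_sqrt Real.pi_pos.le]]
    field_simp
  unfold circNorm
  rw [hint, integral_abs_cos_rpow (by linarith), hconst,
    ← Real.rpow_mul hNv, mul_one_div_cancel hd0, Real.rpow_one]
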